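/- Let Ξ = [[0,1],[−1,0]] and for s ∈ ℝ let R(s) = [[cos s, sin s],[−sin s, cos s]] ∈ M₂(ℝ). Let A, B ∈ M₂(ℝ) be such that A does not commute with Ξ and B does not commute with Ξ. Then the set S = { t ∈ [0, π) : trace(Ξ·R(t)·A·R(t)⁻¹·B) = trace(Ξ·B·R(t)·A·R(t)⁻¹) } contains at most two elements, and if t₁, t₂ ∈ S are distinct then |t₁ − t₂| = π/2. -/
import Mathlib


open Matrix Real

/-- If `A` and `B` are `2×2` real matrices neither of which commutes with
`Ξ = [[0,1],[-1,0]]`, then the set of `t ∈ [0, π)` where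
`trace (Ξ·R(t)·A·R(t)⁻¹·B) = trace (Ξ·B·R(t)·A·R(t)⁻¹)` has at most two elements, and
any two distinct such elements differ by `π/2`. -/
theorem trace_equation_at_most_two_solutions
    (Ξ : Matrix (Fin 2) (Fin 2) ℝ) (hΞ : Ξ = !![0, 1; -1, 0])
    (R : ℝ → Matrix (Fin 2) (Fin 2) ℝ)
    (hR : ∀ s : ℝ, R s = !![Real.cos s, Real.sin s; -Real.sin s, Real.cos s])
    (A B : Matrix (Fin 2) (Fin 2) ℝ)
    (hA : A * Ξ ≠ Ξ * A) (hB : B * Ξ ≠ Ξ * B) :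
    ({t : ℝ | t ∈ Set.Ico 0 π ∧
        (Ξ * R t * A * (R t)⁻¹ * B).trace = (Ξ * B * (R t * A * (R t)⁻¹)).trace}).encard ≤ 2 ∧
      ∀ t₁ ∈ {t : ℝ | t ∈ Set.Ico 0 π ∧
          (Ξ * R t * A * (R t)⁻¹ * B).trace = (Ξ * B * (R t * A * (R t)⁻¹)).trace},
        ∀ t₂ ∈ {t : ℝ | t ∈ Set.Ico 0 π ∧
            (Ξ * R t * A * (R t)⁻¹ * B).trace = (Ξ * B * (R t * A * (R t)⁻¹)).trace},
          t₁ ≠ t₂ → |t₁ - t₂| = π / 2 := by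
  set S : Set ℝ := {t : ℝ | t ∈ Set.Ico 0 π ∧
      (Ξ * R t * A * (R t)⁻¹ * B).trace = (Ξ * B * (R t * A * (R t)⁻¹)).trace} with hS
  have hRinv : ∀ t : ℝ, (R t)⁻¹ = !![Real.cos t, -Real.sin t; Real.sin t, Real.cos t] := by
    intro t; rw [hR]
    apply Matrix.inv_eq_right_inv
    ext i j
    fin_cases i <;> fin_cases j <;>
      simp [Matrix.mul_apply, Fin.sum_univ_two] <;>
      nlinarith [Real.sin_sq_add_cos_sq t]
  set a : ℝ := (A 0 1 + A 1 0) * (B 0 0 - B 1 1) - (A 0 0 - A 1 1) * (B 0 1 + B 1 0) with ha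
  set b : ℝ := -((A 0 0 - A 1 1) * (B 0 0 - B 1 1) + (A 0 1 + A 1 0) * (B 0 1 + B 1 0)) with hb
  have hdiff : ∀ t : ℝ,
      (Ξ * R t * A * (R t)⁻¹ * B).trace - (Ξ * B * (R t * A * (R t)⁻¹)).trace
        = a * Real.cos (2*t) + b * Real.sin (2*t) := by
    intro t
    rw [hRinv, hR, hΞ, ha, hb]
    rw [Matrix.eta_fin_two A, Matrix.eta_fin_two B]
    simp only [Matrix.mul_fin_two, Matrix.trace_fin_two_of, Real.cos_two_mul, Real.sin_two_mul,
      Matrix.cons_val', Matrix.cons_val_zero, Matrix.cons_val_one, Matrix.head_cons,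
      Matrix.empty_val', Matrix.cons_val_fin_one, Matrix.head_fin_const, Matrix.of_apply]
    linear_combination (-((A 0 1 + A 1 0) * (B 0 0 - B 1 1) -
      (A 0 0 - A 1 1) * (B 0 1 + B 1 0))) * Real.sin_sq_add_cos_sq t
  have key : ∀ t : ℝ, t ∈ S ↔
      (0 ≤ t ∧ t < π ∧ a * Real.cos (2*t) + b * Real.sin (2*t) = 0) := by
    intro t
    simp only [hS, Set.mem_setOf_eq, Set.mem_Ico, and_assoc]
    constructor
    · rintro ⟨h0, h1, h2⟩
      exact ⟨h0, h1, by linear_combination h2 - hdiff t⟩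
    · rintro ⟨h0, h1, h2⟩
      exact ⟨h0, h1, by linear_combination hdiff t + h2⟩
  have hA2 : (A 0 0 - A 1 1) ≠ 0 ∨ (A 0 1 + A 1 0) ≠ 0 := by
    by_contra h
    push_neg at h
    apply hA
    ext i j
    fin_cases i <;> fin_cases j <;>
      simp [hΞ, Matrix.mul_apply, Fin.sum_univ_two] <;>
      linarith [h.1, h.2]
  have hB2 : (B 0 0 - B 1 1) ≠ 0 ∨ (B 0 1 + B 1 0) ≠ 0 := by
    by_contra h
    push_neg at h
    apply hB
    ext i j
    fin_cases i <;> fin_cases j <;>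
      simp [hΞ, Matrix.mul_apply, Fin.sum_univ_two] <;>
      linarith [h.1, h.2]
  have hA3 : 0 < (A 0 0 - A 1 1)^2 + (A 0 1 + A 1 0)^2 := by
    rcases hA2 with h | h <;> positivity
  have hB3 : 0 < (B 0 0 - B 1 1)^2 + (B 0 1 + B 1 0)^2 := by
    rcases hB2 with h | h <;> positivity
  have habs : 0 < a^2 + b^2 := by
    have : a^2 + b^2 = ((A 0 0 - A 1 1)^2 + (A 0 1 + A 1 0)^2) *
        ((B 0 0 - B 1 1)^2 + (B 0 1 + B 1 0)^2) := by rw [ha, hb]; ring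
    rw [this]; exact mul_pos hA3 hB3
  have hab : a ≠ 0 ∨ b ≠ 0 := by
    by_contra h
    push_neg at h
    rw [h.1, h.2] at habs
    norm_num at habs
  have hpair : ∀ t₁ ∈ S, ∀ t₂ ∈ S, t₁ ≠ t₂ → |t₁ - t₂| = π / 2 := by
    intro t₁ h₁ t₂ h₂ hne
    obtain ⟨h10, h11, he1⟩ := (key t₁).mp h₁
    obtain ⟨h20, h21, he2⟩ := (key t₂).mp h₂
    have hsin : Real.sin (2*t₁ - 2*t₂) = 0 := by
      rw [Real.sin_sub]
      rcases hab with h | h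
      · have h0 : a * (Real.sin (2*t₁) * Real.cos (2*t₂) - Real.cos (2*t₁) * Real.sin (2*t₂))
            = 0 := by linear_combination (-(Real.sin (2*t₂))) * he1 + (Real.sin (2*t₁)) * he2
        have := (mul_eq_zero.mp h0).resolve_left h
        linarith
      · have h0 : b * (Real.sin (2*t₁) * Real.cos (2*t₂) - Real.cos (2*t₁) * Real.sin (2*t₂))
            = 0 := by linear_combination (Real.cos (2*t₂)) * he1 + (-(Real.cos (2*t₁))) * he2
        have := (mul_eq_zero.mp h0).resolve_left h
        linarith
    obtain ⟨n, hn⟩ := Real.sin_eq_zero_iff.mp hsin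
    have hπ := Real.pi_pos
    have hlt : (-2 : ℝ) < (n : ℝ) ∧ (n : ℝ) < 2 := by
      constructor <;> nlinarith
    have hn2a : (-2 : ℤ) < n := by exact_mod_cast hlt.1
    have hn2b : n < (2 : ℤ) := by exact_mod_cast hlt.2
    interval_cases n
    · -- n = -1 : t₁ - t₂ = -π/2
      push_cast at hn
      rw [show t₁ - t₂ = -(π/2) by linarith, abs_neg, abs_of_pos (by linarith)]
    · -- n = 0
      exfalso
      push_cast at hn
      exact hne (by linarith)
    · -- n = 1
      push_cast at hn
      rw [show t₁ - t₂ = π/2 by linarith, abs_of_pos (by linarith)]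
  refine ⟨?_, hpair⟩
  rcases Set.eq_empty_or_nonempty S with h | ⟨t₀, ht₀⟩
  · rw [h]; simp
  have hπ := Real.pi_pos
  by_cases hc : (t₀ + π/2) ∈ S
  · have hsub : S ⊆ {t₀, t₀ + π/2} := by
      intro t ht
      rcases eq_or_ne t t₀ with rfl | hne
      · exact Set.mem_insert _ _
      have h1 := hpair t ht t₀ ht₀ hne
      rcases (abs_eq (by linarith : (0:ℝ) ≤ π/2)).mp h1 with h2 | h2
      · right; simp only [Set.mem_singleton_iff]; linarith
      · exfalso
        have htne : t ≠ t₀ + π/2 := by intro he; rw [he] at h2; linarith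
        have h3 := hpair t ht (t₀ + π/2) hc htne
        rw [show t - (t₀ + π/2) = -π by linarith, abs_neg, abs_of_pos hπ] at h3
        linarith
    calc S.encard ≤ ({t₀, t₀ + π/2} : Set ℝ).encard := Set.encard_le_encard hsub
      _ ≤ 2 := (Set.encard_pair (by intro h; linarith [h])).le
  · have hsub : S ⊆ {t₀, t₀ - π/2} := by
      intro t ht
      rcases eq_or_ne t t₀ with rfl | hne
      · exact Set.mem_insert _ _
      have h1 := hpair t ht t₀ ht₀ hne
      rcases (abs_eq (by linarith : (0:ℝ) ≤ π/2)).mp h1 with h2 | h2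
      · exfalso
        exact hc (by rw [show t₀ + π/2 = t by linarith]; exact ht)
      · right; simp only [Set.mem_singleton_iff]; linarith
    calc S.encard ≤ ({t₀, t₀ - π/2} : Set ℝ).encard := Set.encard_le_encard hsub
      _ ≤ 2 := (Set.encard_pair (by intro h; linarith [h])).le
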